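/- Let ρ be a left-continuous convex modular on a real vector space X. Then: (1) if for every x₀ ∈ X_ρ and r > 0 the modular ball {y ∈ X_ρ : ρ(y − x₀) < r} is τ_ρ-open, then ρ is right-continuous (for every u ∈ X and λ₀ > 0, ρ(λu) → ρ(λ₀u) as λ → λ₀ from the right); (2) if ρ is right-continuous, then every modular ball {y ∈ X_ρ : ρ(y − x₀) < r} is open with respect to the Luxemburg norm ‖·‖_ρ; (3) if in addition ρ satisfies the Δ₂-property, then openness of every modular ball with respect to ‖·‖_ρ implies that every modular ball is τ_ρ-open. -/

import Mathlib

open Filter Topology ENNReal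

/-- A convex modular on a real vector space `X`. -/
structure IsConvexModular {X : Type*} [AddCommGroup X] [Module ℝ X] (ρ : X → ℝ≥0∞) : Prop where
  zero_iff : ∀ u : X, ρ u = 0 ↔ u = 0
  neg_eq : ∀ u : X, ρ (-u) = ρ u
  convex : ∀ α : ℝ, 0 ≤ α → α ≤ 1 → ∀ u v : X,
    ρ (α • u + (1 - α) • v) ≤ ENNReal.ofReal α * ρ u + ENNReal.ofReal (1 - α) * ρ v

/-- `X_ρ`, the modular vector space associated to `ρ`. -/
def modularSet {X : Type*} [AddCommGroup X] [Module ℝ X] (ρ : X → ℝ≥0∞) : Set X :=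
  {v : X | ∃ l : ℝ, 0 < l ∧ ρ (l • v) < ⊤}

/-- A set `A ⊆ X_ρ` is `τ_ρ`-open if every point of `A` contains a modular ball around it. -/
def IsTauRhoOpen {X : Type*} [AddCommGroup X] [Module ℝ X] (ρ : X → ℝ≥0∞) (A : Set X) : Prop :=
  A ⊆ modularSet ρ ∧
    ∀ x ∈ A, ∃ ε : ℝ, 0 < ε ∧ {y ∈ modularSet ρ | ρ (y - x) < ENNReal.ofReal ε} ⊆ A

/-- `ρ` is left-continuous. -/
def IsLeftContinuousModular {X : Type*} [AddCommGroup X] [Module ℝ X] (ρ : X → ℝ≥0∞) : Prop :=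
  ∀ (u : X) (l₀ : ℝ), 0 < l₀ →
    Tendsto (fun l : ℝ => ρ (l • u)) (nhdsWithin l₀ (Set.Iio l₀)) (nhds (ρ (l₀ • u)))

/-- The Luxemburg norm `‖x‖_ρ := inf {λ > 0 : ρ(x/λ) ≤ 1}`. -/
noncomputable def luxNorm {X : Type*} [AddCommGroup X] [Module ℝ X] (ρ : X → ℝ≥0∞) (x : X) : ℝ :=
  sInf {l : ℝ | 0 < l ∧ ρ (l⁻¹ • x) ≤ 1}

/-- The `Δ₂`-property of a modular. -/
def Delta2 {X : Type*} [AddCommGroup X] [Module ℝ X] (ρ : X → ℝ≥0∞) : Prop :=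
  ∀ x : ℕ → X, Tendsto (fun j => ρ (x j)) atTop (nhds 0) →
    Tendsto (fun j => ρ ((2 : ℝ) • x j)) atTop (nhds 0)

/-- `ρ` is right-continuous. -/
def IsRightContinuousModular {X : Type*} [AddCommGroup X] [Module ℝ X] (ρ : X → ℝ≥0∞) : Prop :=
  ∀ (u : X) (l₀ : ℝ), 0 < l₀ →
    Tendsto (fun l : ℝ => ρ (l • u)) (nhdsWithin l₀ (Set.Ioi l₀)) (nhds (ρ (l₀ • u)))

/-- The open modular ball of center `x₀ ∈ X_ρ` and radius `r`. -/
def modBall {X : Type*} [AddCommGroup X] [Module ℝ X] (ρ : X → ℝ≥0∞) (x₀ : X) (r : ℝ) :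
    Set X :=
  {y ∈ modularSet ρ | ρ (y - x₀) < ENNReal.ofReal r}

/-- A set `A ⊆ X_ρ` is open for the Luxemburg norm. -/
def IsLuxOpen {X : Type*} [AddCommGroup X] [Module ℝ X] (ρ : X → ℝ≥0∞) (A : Set X) : Prop :=
  ∀ x ∈ A, ∃ r : ℝ, 0 < r ∧ {y ∈ modularSet ρ | luxNorm ρ (y - x) < r} ⊆ A

--- auxiliary lemmas ---
section helpers
variable {X : Type*} [AddCommGroup X] [Module ℝ X] {ρ : X → ℝ≥0∞} (hρ : IsConvexModular ρ)
include hρ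

lemma rho_zero : ρ 0 = 0 := (hρ.zero_iff 0).2 rfl

lemma rho_smul_le (z : X) {t s : ℝ} (ht : 0 < t) (hts : t ≤ s) :
    ρ (t • z) ≤ ENNReal.ofReal (t / s) * ρ (s • z) := by
  have hs : 0 < s := ht.trans_le hts
  have key := hρ.convex (t / s) (by positivity) (by rw [div_le_one hs]; exact hts) (s • z) 0
  rw [smul_zero, add_zero, smul_smul, div_mul_cancel₀ _ hs.ne', rho_zero hρ, mul_zero,
    add_zero] at key
  exact key

lemma rho_mono (z : X) {t s : ℝ} (ht : 0 < t) (hts : t ≤ s) : ρ (t • z) ≤ ρ (s • z) := by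
  refine (rho_smul_le hρ z ht hts).trans ?_
  calc ENNReal.ofReal (t / s) * ρ (s • z) ≤ 1 * ρ (s • z) := by
        gcongr
        exact ENNReal.ofReal_le_one.2 (div_le_one_of_le₀ hts (ht.trans_le hts).le)
    _ = ρ (s • z) := one_mul _

lemma modularSet_sub {y x : X} (hy : y ∈ modularSet ρ) (hx : x ∈ modularSet ρ) :
    y - x ∈ modularSet ρ := by
  obtain ⟨l1, hl1, hy1⟩ := hy
  obtain ⟨l2, hl2, hx2⟩ := hx
  set s := min l1 l2 with hs
  have hs0 : 0 < s := lt_min hl1 hl2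
  have hys : ρ (s • y) < ⊤ := (rho_mono hρ y hs0 (min_le_left _ _)).trans_lt hy1
  have hxs : ρ (s • x) < ⊤ := (rho_mono hρ x hs0 (min_le_right _ _)).trans_lt hx2
  refine ⟨s / 2, by positivity, ?_⟩
  have key := hρ.convex (1/2) (by norm_num) (by norm_num) (s • y) (-(s • x))
  have heq : (1/2 : ℝ) • (s • y) + (1 - 1/2 : ℝ) • (-(s • x)) = (s / 2) • (y - x) := by
    rw [smul_sub]
    norm_num [smul_smul, smul_neg, sub_eq_add_neg]
    rw [mul_comm, mul_one_div]
  rw [heq, hρ.neg_eq] at key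
  refine key.trans_lt ?_
  exact ENNReal.add_lt_top.2 ⟨ENNReal.mul_lt_top ENNReal.ofReal_lt_top hys,
    ENNReal.mul_lt_top ENNReal.ofReal_lt_top hxs⟩

lemma lux_set_nonempty {z : X} (hz : z ∈ modularSet ρ) :
    {l : ℝ | 0 < l ∧ ρ (l⁻¹ • z) ≤ 1}.Nonempty := by
  obtain ⟨l, hl, hlz⟩ := hz
  set M := (ρ (l • z)).toReal with hM
  have hM0 : 0 ≤ M := ENNReal.toReal_nonneg
  set t : ℝ := 1 / (M + 1) with ht
  have ht0 : 0 < t := by positivity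
  have ht1 : t ≤ 1 := by
    rw [ht, div_le_one (by positivity)]; linarith
  refine ⟨(t * l)⁻¹, by positivity, ?_⟩
  rw [inv_inv]
  have h1 : ρ ((t * l) • z) ≤ ENNReal.ofReal ((t * l) / l) * ρ (l • z) :=
    rho_smul_le hρ z (by positivity) (by nlinarith)
  rw [mul_div_cancel_right₀ _ hl.ne'] at h1
  refine h1.trans ?_
  rw [← ENNReal.ofReal_toReal hlz.ne, ← hM, ← ENNReal.ofReal_mul ht0.le]
  refine ENNReal.ofReal_le_one.2 ?_
  rw [ht, div_mul_eq_mul_div, one_mul, div_le_one (by positivity)]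
  linarith

end helpers

section part1
variable {X : Type*} [AddCommGroup X] [Module ℝ X] {ρ : X → ℝ≥0∞} (hρ : IsConvexModular ρ)
include hρ

lemma rho_small (z : X) {s : ℝ} (hs : 0 < s) (hfin : ρ (s • z) ≠ ⊤) {ε : ℝ} (hε : 0 < ε) :
    ∃ δ : ℝ, 0 < δ ∧ ∀ t : ℝ, 0 < t → t < δ → ρ (t • z) < ENNReal.ofReal ε := by
  set M := (ρ (s • z)).toReal with hM
  have hM0 : 0 ≤ M := ENNReal.toReal_nonneg
  refine ⟨min s (ε * s / (M + 1)), lt_min hs (by positivity), fun t ht htδ => ?_⟩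
  have hts : t ≤ s := le_of_lt (htδ.trans_le (min_le_left _ _))
  have ht2 : t < ε * s / (M + 1) := htδ.trans_le (min_le_right _ _)
  have h1 : ρ (t • z) ≤ ENNReal.ofReal (t / s) * ρ (s • z) := rho_smul_le hρ z ht hts
  rw [← ENNReal.ofReal_toReal hfin, ← hM, ← ENNReal.ofReal_mul (by positivity)] at h1
  refine h1.trans_lt (ENNReal.ofReal_lt_ofReal_iff hε |>.2 ?_)
  have h2 : t * (M + 1) < ε * s := (lt_div_iff₀ (by positivity)).1 ht2
  have : t * M < ε * s := by nlinarith
  rw [div_mul_eq_mul_div, div_lt_iff₀ hs]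
  nlinarith

lemma part1 (h : ∀ x₀ ∈ modularSet ρ, ∀ r : ℝ, 0 < r → IsTauRhoOpen ρ (modBall ρ x₀ r)) :
    IsRightContinuousModular ρ := by
  intro u l₀ hl₀
  by_cases hfin : ρ (l₀ • u) = ⊤
  · have hev : ∀ᶠ l in 𝓝[>] l₀, ρ (l • u) = ⊤ := by
      filter_upwards [self_mem_nhdsWithin] with l hl
      exact top_le_iff.1 (hfin ▸ rho_mono hρ u hl₀ (le_of_lt hl))
    rw [hfin]
    exact Tendsto.congr' (hev.mono fun l h => h.symm) tendsto_const_nhds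
  · refine tendsto_order.2 ⟨fun a ha => ?_, fun b hb => ?_⟩
    · filter_upwards [self_mem_nhdsWithin] with l hl
      exact ha.trans_le (rho_mono hρ u hl₀ hl.le)
    · obtain ⟨c, _, hc1, hc2⟩ := ENNReal.lt_iff_exists_real_btwn.1 hb
      have hcpos : 0 < c := ENNReal.ofReal_pos.1 ((zero_le).trans_lt hc1)
      obtain ⟨-, hopen⟩ := h 0 ⟨1, one_pos, by simp [rho_zero hρ]⟩ c hcpos
      have hx : l₀ • u ∈ modBall ρ 0 c :=
        ⟨⟨1, one_pos, by simpa using lt_top_iff_ne_top.2 hfin⟩, by simpa using hc1⟩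
      obtain ⟨ε, hε, hball⟩ := hopen _ hx
      obtain ⟨δ, hδ, hsmall⟩ := rho_small hρ u hl₀ hfin hε
      filter_upwards [Ioo_mem_nhdsGT_of_mem (Set.left_mem_Ico.2 (lt_add_of_pos_right l₀ hδ))]
        with l hl
      have hdiff : ρ ((l - l₀) • u) < ENNReal.ofReal ε :=
        hsmall _ (sub_pos.2 hl.1) (by linarith [hl.2])
      have hl0 : (0:ℝ) < l := hl₀.trans hl.1
      have hmem : l • u ∈ modularSet ρ :=
        ⟨l₀ / l, by positivity, by
          rw [smul_smul, div_mul_cancel₀ _ hl0.ne']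
          exact lt_top_iff_ne_top.2 hfin⟩
      have hin : l • u ∈ modBall ρ 0 c := hball ⟨hmem, by rw [← sub_smul]; exact hdiff⟩
      calc ρ (l • u) = ρ (l • u - 0) := by rw [sub_zero]
        _ < ENNReal.ofReal c := hin.2
        _ < b := hc2

end part1

section part2
variable {X : Type*} [AddCommGroup X] [Module ℝ X] {ρ : X → ℝ≥0∞} (hρ : IsConvexModular ρ)
include hρ

lemma lux_lt {z : X} (hz : z ∈ modularSet ρ) {δ : ℝ} (h : luxNorm ρ z < δ) :
    ∃ l : ℝ, 0 < l ∧ l < δ ∧ ρ (l⁻¹ • z) ≤ 1 := by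
  obtain ⟨l, hl, hlδ⟩ := exists_lt_of_csInf_lt (lux_set_nonempty hρ hz) h
  exact ⟨l, hl.1, hlδ, hl.2⟩

lemma part2 (hrc : IsRightContinuousModular ρ) :
    ∀ x₀ ∈ modularSet ρ, ∀ r : ℝ, 0 < r → IsLuxOpen ρ (modBall ρ x₀ r) := by
  intro x₀ hx₀ r hr x hx
  obtain ⟨hxm, hxlt⟩ := hx
  obtain ⟨c, hc0, hc1, hc2⟩ := ENNReal.lt_iff_exists_real_btwn.1 hxlt
  have hcr : c < r := by
    by_contra hcr; push_neg at hcr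
    exact absurd hc2 (not_lt.2 (ENNReal.ofReal_le_ofReal hcr))
  have hrc1 := hrc (x - x₀) 1 one_pos
  rw [one_smul] at hrc1
  have hev : ∀ᶠ μ in 𝓝[>] (1:ℝ), ρ (μ • (x - x₀)) < ENNReal.ofReal c :=
    hrc1.eventually_lt_const hc1
  obtain ⟨μ, hμlt, hμ1⟩ := (hev.and eventually_mem_nhdsWithin).exists
  rw [Set.mem_Ioi] at hμ1
  have hμ0 : (0:ℝ) < μ := lt_trans one_pos hμ1
  have hμinv : μ⁻¹ < 1 := inv_lt_one_of_one_lt₀ hμ1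
  set δ := min (1 - μ⁻¹) ((r - c) / 2) with hδdef
  have hδ0 : 0 < δ := lt_min (by linarith) (by linarith)
  refine ⟨δ, hδ0, ?_⟩
  rintro y ⟨hym, hylt⟩
  obtain ⟨l, hl0, hlδ, hl1⟩ := lux_lt hρ (modularSet_sub hρ hym hxm) hylt
  have hμinv0 : 0 < μ⁻¹ := inv_pos.2 hμ0
  have hll : l < 1 - μ⁻¹ := hlδ.trans_le (min_le_left _ _)
  have hl1' : l < 1 := by linarith
  have h1l : 0 < 1 - l := by linarith
  have hinv : (1 - l)⁻¹ ≤ μ := (inv_le_comm₀ h1l hμ0).2 (by linarith)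
  have heq : l • (l⁻¹ • (y - x)) + (1 - l) • ((1 - l)⁻¹ • (x - x₀)) = y - x₀ := by
    rw [smul_smul, smul_smul, mul_inv_cancel₀ hl0.ne', mul_inv_cancel₀ h1l.ne',
      one_smul, one_smul]
    abel
  have key := hρ.convex l hl0.le hl1'.le (l⁻¹ • (y - x)) ((1 - l)⁻¹ • (x - x₀))
  rw [heq] at key
  have hb1 : ENNReal.ofReal l * ρ (l⁻¹ • (y - x)) ≤ ENNReal.ofReal l := by
    calc ENNReal.ofReal l * ρ (l⁻¹ • (y - x)) ≤ ENNReal.ofReal l * 1 := by gcongr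
      _ = ENNReal.ofReal l := mul_one _
  have hb2 : ρ ((1 - l)⁻¹ • (x - x₀)) < ENNReal.ofReal c :=
    lt_of_le_of_lt (rho_mono hρ (x - x₀) (inv_pos.2 h1l) hinv) hμlt
  have hb2' : ENNReal.ofReal (1 - l) * ρ ((1 - l)⁻¹ • (x - x₀)) ≤ ρ ((1 - l)⁻¹ • (x - x₀)) := by
    calc ENNReal.ofReal (1 - l) * ρ ((1 - l)⁻¹ • (x - x₀))
        ≤ 1 * ρ ((1 - l)⁻¹ • (x - x₀)) := by gcongr; exact ENNReal.ofReal_le_one.2 (by linarith)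
      _ = _ := one_mul _
  refine ⟨hym, ?_⟩
  calc ρ (y - x₀) ≤ _ := key
    _ ≤ ENNReal.ofReal l + ρ ((1 - l)⁻¹ • (x - x₀)) := add_le_add hb1 hb2'
    _ < ENNReal.ofReal l + ENNReal.ofReal c := ENNReal.add_lt_add_left ENNReal.ofReal_ne_top hb2
    _ = ENNReal.ofReal (l + c) := (ENNReal.ofReal_add hl0.le hc0).symm
    _ < ENNReal.ofReal r := by
        refine (ENNReal.ofReal_lt_ofReal_iff hr).2 ?_
        have : l < (r - c) / 2 := hlδ.trans_le (min_le_right _ _)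
        linarith

end part2

section part3
variable {X : Type*} [AddCommGroup X] [Module ℝ X] {ρ : X → ℝ≥0∞}

lemma delta2_iter (hd : Delta2 ρ) (k : ℕ) (x : ℕ → X)
    (h : Tendsto (fun j => ρ (x j)) atTop (nhds 0)) :
    Tendsto (fun j => ρ (((2 : ℝ) ^ k) • x j)) atTop (nhds 0) := by
  induction k with
  | zero => simpa using h
  | succ k ih =>
      have := hd (fun j => ((2 : ℝ) ^ k) • x j) ih
      simpa [smul_smul, pow_succ, mul_comm] using this

lemma delta2_key {X : Type*} [AddCommGroup X] [Module ℝ X] {ρ : X → ℝ≥0∞} (hd : Delta2 ρ) (k : ℕ) :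
    ∃ ε : ℝ, 0 < ε ∧ ∀ z : X, ρ z < ENNReal.ofReal ε → ρ (((2 : ℝ) ^ k) • z) ≤ 1 := by
  by_contra hcon
  push_neg at hcon
  have hchoice : ∀ j : ℕ, ∃ z : X, ρ z < ENNReal.ofReal (1 / (j + 1)) ∧
      1 < ρ (((2 : ℝ) ^ k) • z) := by
    intro j
    obtain ⟨z, hz1, hz2⟩ := hcon (1 / (j + 1)) (by positivity)
    exact ⟨z, hz1, hz2⟩
  choose z hz1 hz2 using hchoice
  have htend : Tendsto (fun j => ρ (z j)) atTop (nhds 0) := by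
    have hupper : Tendsto (fun j : ℕ => ENNReal.ofReal (1 / (j + 1))) atTop (nhds 0) := by
      rw [show ((0:ℝ≥0∞)) = ENNReal.ofReal 0 by simp]
      exact ENNReal.tendsto_ofReal tendsto_one_div_add_atTop_nhds_zero_nat
    exact tendsto_of_tendsto_of_tendsto_of_le_of_le tendsto_const_nhds hupper
      (fun j => zero_le) (fun j => (hz1 j).le)
  have := delta2_iter hd k z htend
  have hev := this.eventually_lt_const (zero_lt_one (α := ℝ≥0∞))
  obtain ⟨j, hj⟩ := hev.exists
  exact absurd hj (not_lt.2 (hz2 j).le)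

lemma part3 (hd : Delta2 ρ)
    (hlux : ∀ x₀ ∈ modularSet ρ, ∀ r : ℝ, 0 < r → IsLuxOpen ρ (modBall ρ x₀ r)) :
    ∀ x₀ ∈ modularSet ρ, ∀ r : ℝ, 0 < r → IsTauRhoOpen ρ (modBall ρ x₀ r) := by
  intro x₀ hx₀ r hr
  refine ⟨fun y hy => hy.1, fun x hx => ?_⟩
  obtain ⟨δ, hδ, hsub⟩ := hlux x₀ hx₀ r hr x hx
  obtain ⟨k, hk⟩ := pow_unbounded_of_one_lt (δ⁻¹) (one_lt_two (α := ℝ))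
  obtain ⟨ε, hε, hkey⟩ := delta2_key hd k
  refine ⟨ε, hε, ?_⟩
  rintro y ⟨hym, hylt⟩
  refine hsub ⟨hym, ?_⟩
  have h2k : (0:ℝ) < 2 ^ k := by positivity
  have hmem : ((2:ℝ) ^ k)⁻¹ ∈ {l : ℝ | 0 < l ∧ ρ (l⁻¹ • (y - x)) ≤ 1} := by
    refine ⟨by positivity, ?_⟩
    rw [inv_inv]
    exact hkey _ hylt
  have : luxNorm ρ (y - x) ≤ ((2:ℝ) ^ k)⁻¹ :=
    csInf_le ⟨0, fun l hl => hl.1.le⟩ hmem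
  refine this.trans_lt ?_
  rw [inv_lt_comm₀ h2k hδ] at *
  exact hk

end part3


/-- (1) if every open modular ball is `τ_ρ`-open then `ρ` is right-continuous;
(2) if `ρ` is right-continuous then every open modular ball is Luxemburg-norm open;
(3) if moreover `ρ` has the `Δ₂`-property, then Luxemburg-norm openness of all open
modular balls implies that they are all `τ_ρ`-open. -/
theorem modular_balls_open_right_continuity {X : Type*} [AddCommGroup X] [Module ℝ X]
    (ρ : X → ℝ≥0∞) (hρ : IsConvexModular ρ) (hlc : IsLeftContinuousModular ρ) :
    ((∀ x₀ ∈ modularSet ρ, ∀ r : ℝ, 0 < r → IsTauRhoOpen ρ (modBall ρ x₀ r)) →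
        IsRightContinuousModular ρ) ∧
    (IsRightContinuousModular ρ →
        ∀ x₀ ∈ modularSet ρ, ∀ r : ℝ, 0 < r → IsLuxOpen ρ (modBall ρ x₀ r)) ∧
    (Delta2 ρ →
      (∀ x₀ ∈ modularSet ρ, ∀ r : ℝ, 0 < r → IsLuxOpen ρ (modBall ρ x₀ r)) →
      (∀ x₀ ∈ modularSet ρ, ∀ r : ℝ, 0 < r → IsTauRhoOpen ρ (modBall ρ x₀ r))) :=
  ⟨part1 hρ, part2 hρ, fun hd hl => part3 hd hl⟩
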